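/- arXiv:1001.2140 — 6 statements merged into one kernel-verified Lean document; each statement's English description precedes it below -/
import Mathlib

section
/- For every choice of the Boolean function g, the function f is balanced: if x is uniformly distributed on {0,1}^n, then f(x) is uniformly distributed on {0,1}^D, i.e. Pr[f(x) = a] = 2^{-D} for every a ∈ {0,1}^D. -/
/-- The NLHB function `f : {0,1}^n → {0,1}^{n-p}`, defined coordinatewise by
`f(x)_i = x_i + g(x_{i+1}, …, x_{i+p})` (indices 0-based), addition over `GF(2)`. -/
def nlhbF (p n : ℕ) (g : (Fin p → ZMod 2) → ZMod 2)
    (x : Fin n → ZMod 2) : Fin (n - p) → ZMod 2 :=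
  fun i => x ⟨i.val, by have := i.isLt; omega⟩ +
    g (fun j => x ⟨i.val + 1 + j.val, by have := i.isLt; have := j.isLt; omega⟩)

def recon (p n : ℕ) (hpn : p < n) (g : (Fin p → ZMod 2) → ZMod 2)
    (a : Fin (n - p) → ZMod 2) (t : Fin p → ZMod 2) : (i : ℕ) → i < n → ZMod 2 :=
  fun i hi =>
    if h : i < n - p then
      a ⟨i, h⟩ + g (fun j => recon p n hpn g a t (i + 1 + j.val)
        (by have := j.isLt; omega))
    else t ⟨i - (n - p), by omega⟩
termination_by i _ => n - i
decreasing_by have := Fin.isLt j; omega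

lemma recon_lt (p n : ℕ) (hpn : p < n) (g) (a) (t) (i : ℕ) (h : i < n - p) :
    recon p n hpn g a t i (by omega) =
      a ⟨i, h⟩ + g (fun j => recon p n hpn g a t (i + 1 + j.val)
        (by have := j.isLt; omega)) := by
  rw [recon]; simp [h]

lemma recon_ge (p n : ℕ) (hpn : p < n) (g) (a) (t) (i : ℕ) (hi : i < n)
    (h : ¬ i < n - p) :
    recon p n hpn g a t i hi = t ⟨i - (n - p), by omega⟩ := by
  rw [recon]; simp [h]

def reconX (p n : ℕ) (hpn : p < n) (g : (Fin p → ZMod 2) → ZMod 2)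
    (a : Fin (n - p) → ZMod 2) (t : Fin p → ZMod 2) :
    Fin n → ZMod 2 := fun i => recon p n hpn g a t i.val i.isLt

lemma reconX_spec (p n : ℕ) (hpn : p < n) (g) (a) (t : Fin p → ZMod 2) :
    nlhbF p n g (reconX p n hpn g a t) = a := by
  funext i
  show recon p n hpn g a t i.val _ + _ = a i
  rw [recon_lt p n hpn g a t i.val i.isLt]
  have : (fun j : Fin p => recon p n hpn g a t (i.val + 1 + j.val)
      (by have := j.isLt; have := i.isLt; omega)) =
    (fun j : Fin p => reconX p n hpn g a t
      ⟨i.val + 1 + j.val, by have := i.isLt; have := j.isLt; omega⟩) := rfl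
  rw [this]
  have h2 : ∀ z : ZMod 2, ∀ w : ZMod 2, z + w + w = z := by decide
  exact (h2 _ _).trans (by cases i; rfl)

lemma reconX_of_mem (p n : ℕ) (hpn : p < n) (g) (a) (x : Fin n → ZMod 2)
    (hx : nlhbF p n g x = a) :
    reconX p n hpn g a (fun k => x ⟨n - p + k.val, by have := k.isLt; omega⟩) = x := by
  set t := fun k : Fin p => x ⟨n - p + k.val, by have := k.isLt; omega⟩ with ht
  funext i
  suffices H : ∀ m (i : ℕ) (hi : i < n), n - i ≤ m → recon p n hpn g a t i hi = x ⟨i, hi⟩ by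
    exact H n i.val i.isLt (by omega)
  intro m
  induction m with
  | zero => intro i hi h; omega
  | succ m ih =>
    intro i hi h
    by_cases hc : i < n - p
    · rw [recon_lt p n hpn g a t i hc]
      have hw : (fun j : Fin p => recon p n hpn g a t (i + 1 + j.val)
          (by have := j.isLt; omega)) =
          (fun j : Fin p => x ⟨i + 1 + j.val, by have := j.isLt; omega⟩) := by
        funext j
        exact ih (i + 1 + j.val) (by have := j.isLt; omega) (by have := j.isLt; omega)
      rw [hw]
      have := congrFun hx ⟨i, hc⟩
      unfold nlhbF at this
      have h2 : ∀ z w v : ZMod 2, z + w = v → v + w = z := by decide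
      exact h2 _ _ _ this
    · rw [recon_ge p n hpn g a t i hi hc, ht]
      exact congrArg x (Fin.ext (by simp only []; omega))

def fiberEquiv (p n : ℕ) (hpn : p < n) (g) (a) :
    (Fin p → ZMod 2) ≃ {x : Fin n → ZMod 2 // nlhbF p n g x = a} where
  toFun t := ⟨reconX p n hpn g a t, reconX_spec p n hpn g a t⟩
  invFun x := fun k => x.1 ⟨n - p + k.val, by have := k.isLt; omega⟩
  left_inv t := by
    funext k
    show recon p n hpn g a t (n - p + k.val) _ = t k
    rw [recon_ge p n hpn g a t _ _ (by omega)]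
    exact congrArg t (Fin.ext (by simp only []; omega))
  right_inv x := Subtype.ext (reconX_of_mem p n hpn g a x.1 x.2)

/-- For every `g`, if `x` is uniform on `{0,1}^n` then `f(x)` is uniform on
`{0,1}^D`, i.e. `Pr[f(x) = a] = 2^{-D}` for every `a`. -/
theorem nlhb_output_uniform (p n : ℕ) (hp : 1 ≤ p) (hpn : p < n)
    (g : (Fin p → ZMod 2) → ZMod 2) (a : Fin (n - p) → ZMod 2) :
    (PMF.map (nlhbF p n g) (PMF.uniformOfFintype (Fin n → ZMod 2))) a
      = ((2 : ENNReal) ^ (n - p))⁻¹ := by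
  have hcard : Fintype.card {x : Fin n → ZMod 2 // nlhbF p n g x = a} = 2 ^ p := by
    rw [← Fintype.card_congr (fiberEquiv p n hpn g a)]
    simp [ZMod.card]
  rw [PMF.map_apply]
  simp only [PMF.uniformOfFintype_apply]
  rw [tsum_fintype]
  have hcardn : (Fintype.card (Fin n → ZMod 2)) = 2 ^ n := by simp [ZMod.card]
  have hfilter : (Finset.univ.filter (fun x => a = nlhbF p n g x)).card = 2 ^ p := by
    rw [← hcard, Fintype.card_subtype]
    congr 1
    ext x
    simp [eq_comm]
  calc (∑ x : Fin n → ZMod 2, if a = nlhbF p n g x then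
          ((Fintype.card (Fin n → ZMod 2)) : ENNReal)⁻¹ else 0)
      = (Finset.univ.filter (fun x => a = nlhbF p n g x)).card •
          ((Fintype.card (Fin n → ZMod 2)) : ENNReal)⁻¹ := by
        rw [← Finset.sum_filter, Finset.sum_const]
    _ = ((2 : ENNReal) ^ (n - p))⁻¹ := by
        rw [hfilter, hcardn]
        push_cast
        rw [nsmul_eq_mul]
        push_cast
        have hn : (2 : ENNReal) ^ n = 2 ^ (n - p) * 2 ^ p := by
          rw [← pow_add]; congr 1; omega
        rw [hn, ENNReal.mul_inv (by simp) (by simp), mul_comm ((2:ENNReal)^(n-p))⁻¹,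
          ← mul_assoc, ENNReal.mul_inv_cancel (by simp) (by simp), one_mul]
end

section
/- Let x be uniformly distributed on {0,1}^n and write y = f(x). For every i with 2 ≤ i ≤ D and every a = (a_1, …, a_i) ∈ {0,1}^i, the probability that the last i bits of y equal a satisfies the recursion Pr[(y_{D−i+1}, …, y_D) = (a_1, …, a_i)] = (1/2) · Pr[(y_{D−i+2}, …, y_D) = (a_2, …, a_i)]. -/
open scoped ENNReal
set_option maxHeartbeats 1000000

lemma unif_meas {α : Type*} [Fintype α] [Nonempty α] (s : Set α)
    [DecidablePred (· ∈ s)] :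
    (PMF.uniformOfFintype α).toOuterMeasure s
      = (Finset.univ.filter (· ∈ s)).card * ((Fintype.card α : ℝ≥0∞))⁻¹ := by
  rw [PMF.toOuterMeasure_apply_fintype]
  simp only [Set.indicator, PMF.uniformOfFintype_apply]
  rw [Finset.sum_ite, Finset.sum_const, Finset.sum_const_zero]
  simp [mul_comm]

lemma nlhb_congr (p n : ℕ) (g : (Fin p → ZMod 2) → ZMod 2)
    (x : Fin n → ZMod 2) {v w : ℕ} (hv : v < n - p) (hw : w < n - p)
    (h : v = w) : nlhbF p n g x ⟨v, hv⟩ = nlhbF p n g x ⟨w, hw⟩ := by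
  subst h; rfl

lemma nlhb_update_high (p n : ℕ) (g : (Fin p → ZMod 2) → ZMod 2)
    (x : Fin n → ZMod 2) (k : Fin n) (c : ZMod 2) (m : Fin (n - p))
    (hk : k.val < m.val) :
    nlhbF p n g (Function.update x k c) m = nlhbF p n g x m := by
  unfold nlhbF
  congr 1
  · exact Function.update_of_ne (by
      intro h
      have := congrArg Fin.val h
      simp at this; omega) _ _
  · congr 1
    funext j
    exact Function.update_of_ne (by
      intro h
      have := congrArg Fin.val h
      simp at this; omega) _ _

lemma nlhb_update_flip (p n : ℕ) (g : (Fin p → ZMod 2) → ZMod 2)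
    (x : Fin n → ZMod 2) (m : Fin (n - p)) (hm : m.val < n) :
    nlhbF p n g (Function.update x ⟨m.val, hm⟩ (x ⟨m.val, hm⟩ + 1)) m
      = nlhbF p n g x m + 1 := by
  unfold nlhbF
  rw [Function.update_self]
  have harg : (fun j : Fin p => Function.update x ⟨m.val, hm⟩
        (x ⟨m.val, hm⟩ + 1)
        ⟨m.val + 1 + j.val, by have := m.isLt; have := j.isLt; omega⟩)
      = (fun j : Fin p => x ⟨m.val + 1 + j.val, by have := m.isLt; have := j.isLt; omega⟩) := by
    funext j
    exact Function.update_of_ne (by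
      intro h
      have := congrArg Fin.val h
      simp at this; omega) _ _
  rw [congrArg g harg]
  exact add_right_comm _ _ _

lemma zmod2_ne_iff (u v : ZMod 2) (h : u ≠ v) : u = v + 1 := by revert u v; decide
lemma zmod2_add_one_one (v : ZMod 2) : v + 1 + 1 = v := by revert v; decide
lemma zmod2_add_one_ne (v : ZMod 2) : v + 1 ≠ v := by revert v; decide

lemma ennreal_half_mul (c t : ℝ≥0∞) : 1 / 2 * (2 * c * t) = c * t := by
  rw [mul_assoc 2 c t, one_div, ← mul_assoc,
    ENNReal.inv_mul_cancel (by norm_num) (by norm_num), one_mul]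

/-- With `x` uniform on `{0,1}^n` and `y = f(x)`, for every `2 ≤ i ≤ D` and
`a ∈ {0,1}^i`, `Pr[(y_{D−i+1}, …, y_D) = (a_1, …, a_i)]
  = (1/2) · Pr[(y_{D−i+2}, …, y_D) = (a_2, …, a_i)]`
(positions written 0-based: the last `i` bits of `y` occupy indices `D−i, …, D−1`). -/
theorem nlhb_suffix_recursion (p n : ℕ) (hp : 1 ≤ p) (hpn : p < n)
    (g : (Fin p → ZMod 2) → ZMod 2) (i : ℕ) (h2 : 2 ≤ i) (hiD : i ≤ n - p)
    (a : Fin i → ZMod 2) :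
    (PMF.uniformOfFintype (Fin n → ZMod 2)).toOuterMeasure
      {x | ∀ j : Fin i,
        nlhbF p n g x ⟨n - p - i + j.val, by have := j.isLt; omega⟩ = a j}
    = (1 / 2) *
      (PMF.uniformOfFintype (Fin n → ZMod 2)).toOuterMeasure
        {x | ∀ j : Fin (i - 1),
          nlhbF p n g x ⟨n - p - i + 1 + j.val, by have := j.isLt; omega⟩
            = a ⟨j.val + 1, by have := j.isLt; omega⟩} := by
  classical
  have hkn : n - p - i < n := by omega
  set k : Fin n := ⟨n - p - i, hkn⟩ with hkdef
  set A : Set (Fin n → ZMod 2) := {x | ∀ j : Fin i,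
      nlhbF p n g x ⟨n - p - i + j.val, by have := j.isLt; omega⟩ = a j} with hA
  set B : Set (Fin n → ZMod 2) := {x | ∀ j : Fin (i - 1),
      nlhbF p n g x ⟨n - p - i + 1 + j.val, by have := j.isLt; omega⟩
        = a ⟨j.val + 1, by have := j.isLt; omega⟩} with hB
  rw [unif_meas A, unif_meas B]
  set sA := Finset.univ.filter (· ∈ A) with hsA
  set sB := Finset.univ.filter (· ∈ B) with hsB
  set flip : (Fin n → ZMod 2) → (Fin n → ZMod 2) :=
    fun x => Function.update x k (x k + 1) with hflip
  have hflipflip : ∀ x, flip (flip x) = x := by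
    intro x
    funext m
    by_cases hm : m = k
    · subst hm
      simp only [hflip, Function.update_self]
      exact zmod2_add_one_one _
    · simp only [hflip, Function.update_of_ne hm]
  have hflip_high : ∀ (x : Fin n → ZMod 2) (m : Fin (n - p)), n - p - i < m.val →
      nlhbF p n g (flip x) m = nlhbF p n g x m := by
    intro x m hm
    exact nlhb_update_high p n g x k _ m hm
  have hDi : n - p - i < n - p := by omega
  have h0i : 0 < i := by omega
  have hflip_at : ∀ (x : Fin n → ZMod 2),
      nlhbF p n g (flip x) ⟨n - p - i, hDi⟩ = nlhbF p n g x ⟨n - p - i, hDi⟩ + 1 := by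
    intro x
    exact nlhb_update_flip p n g x ⟨n - p - i, hDi⟩ hkn
  have hA_mem : ∀ x, x ∈ A ↔
      (x ∈ B ∧ nlhbF p n g x ⟨n - p - i, hDi⟩ = a ⟨0, h0i⟩) := by
    intro x
    constructor
    · intro hx
      refine ⟨?_, ?_⟩
      · intro j
        have h := hx ⟨j.val + 1, by have := j.isLt; omega⟩
        exact (nlhb_congr p n g x _ _ (by simp only [Fin.val_mk]; omega)).trans h
      · have h := hx ⟨0, h0i⟩
        exact (nlhb_congr p n g x _ _ (by simp only [Fin.val_mk]; omega)).trans h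
    · rintro ⟨hxB, hx0⟩
      intro j
      rcases Nat.eq_zero_or_pos j.val with hj0 | hjpos
      · have hj : j = ⟨0, h0i⟩ := Fin.ext hj0
        rw [hj]
        exact (nlhb_congr p n g x _ _ (by simp only [Fin.val_mk]; omega)).trans hx0
      · have h := hxB ⟨j.val - 1, by have := j.isLt; omega⟩
        have hj : (⟨(j.val - 1) + 1, by have := j.isLt; omega⟩ : Fin i) = j :=
          Fin.ext (by simp; omega)
        rw [hj] at h
        exact (nlhb_congr p n g x _ _ (by simp only [Fin.val_mk]; omega)).trans h
  have hBmem_flip : ∀ x, x ∈ B → flip x ∈ B := by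
    intro x hx j
    rw [hflip_high x _ (by simp only [Fin.val_mk]; omega)]
    exact hx j
  have key : sB = sA ∪ sA.image flip := by
    ext x
    simp only [hsA, hsB, Finset.mem_union, Finset.mem_image, Finset.mem_filter,
      Finset.mem_univ, true_and]
    constructor
    · intro hx
      by_cases h0 : nlhbF p n g x ⟨n - p - i, hDi⟩ = a ⟨0, h0i⟩
      · left; exact (hA_mem x).2 ⟨hx, h0⟩
      · right
        refine ⟨flip x, ?_, hflipflip x⟩
        refine (hA_mem _).2 ⟨hBmem_flip x hx, ?_⟩
        rw [hflip_at x, zmod2_ne_iff _ _ h0]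
        exact zmod2_add_one_one _
    · rintro (hx | ⟨z, hz, rfl⟩)
      · exact ((hA_mem x).1 hx).1
      · exact hBmem_flip z ((hA_mem z).1 hz).1
  have hdisj : Disjoint sA (sA.image flip) := by
    rw [Finset.disjoint_left]
    rintro x hx hx'
    simp only [Finset.mem_image, hsA, Finset.mem_filter, Finset.mem_univ, true_and] at hx hx'
    obtain ⟨z, hz, rfl⟩ := hx'
    have h1 := ((hA_mem _).1 hx).2
    have h2 := ((hA_mem z).1 hz).2
    rw [hflip_at z, h2] at h1
    exact zmod2_add_one_ne _ h1
  have hflipinj : Function.Injective flip := by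
    intro x y h
    have := congrArg flip h
    rwa [hflipflip, hflipflip] at this
  have hcard : sB.card = 2 * sA.card := by
    rw [key, Finset.card_union_of_disjoint hdisj,
      Finset.card_image_of_injective _ hflipinj]
    ring
  rw [hcard]
  push_cast
  rw [ennreal_half_mul]
end

section
/- Suppose g vanishes on all inputs of Hamming weight at most 1. Let G be a binary k × n' matrix with columns g_1, …, g_{n'}, let m ∈ {0,1}^k, and write x = mG ∈ {0,1}^{n'} with bits x_1, …, x_{n'} (matrix–vector product over GF(2)). Choose integers r_1, …, r_{n'−1} with r_i ≥ p − 1 and r_1 + ⋯ + r_{n'−1} = n − p − n', and let A be the k × n matrix obtained from G by inserting r_i all-zero columns between columns g_i and g_{i+1} for each 1 ≤ i ≤ n'−1 and appending p all-zero columns after g_{n'}. Then f(mA) is the D-bit vector [x_1, 0^{r_1}, x_2, 0^{r_2}, …, 0^{r_{n'−1}}, x_{n'}], i.e. f(mA) has x_j in position 1 + Σ_{i<j}(r_i + 1) for each 1 ≤ j ≤ n' and zeros in all other positions. -/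
/-- Suppose `g` vanishes on inputs of Hamming weight ≤ 1.  Let `x = mG` and let
`A` be obtained from `G` by inserting `r_i` zero columns between columns `i` and `i+1`
(`1 ≤ i ≤ n'−1`) and appending `p` zero columns at the end, so that column `j` of `G` sits at
(0-based) position `pos j = j + Σ_{i<j} r_i` of `A`, with `r_i ≥ p−1` and
`Σ r_i = n − p − n'`.  Then `f(mA)` is the `D`-bit vector
`[x_1, 0^{r_1}, x_2, 0^{r_2}, …, 0^{r_{n'−1}}, x_{n'}]`:
it has `x_j` at position `pos j` and zeros everywhere else. -/
theorem nlhb_embedding (p n n' k : ℕ) (hp : 1 ≤ p) (hpn : p < n)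
    (g : (Fin p → ZMod 2) → ZMod 2)
    (hg : ∀ w : Fin p → ZMod 2, hammingNorm w ≤ 1 → g w = 0)
    (r : ℕ → ℕ) (hr : ∀ i, i < n' - 1 → p - 1 ≤ r i)
    (hrsum : ∑ i ∈ Finset.range (n' - 1), r i = n - p - n')
    (hpos : ∀ j : Fin n', j.val + ∑ i ∈ Finset.range j.val, r i < n - p)
    (G : Matrix (Fin k) (Fin n') (ZMod 2)) (m : Fin k → ZMod 2)
    (A : Matrix (Fin k) (Fin n) (ZMod 2))
    (hA1 : ∀ j : Fin n', ∀ t : Fin k,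
      A t ⟨j.val + ∑ i ∈ Finset.range j.val, r i, by have := hpos j; omega⟩ = G t j)
    (hA0 : ∀ c : Fin n,
      (∀ j : Fin n', j.val + ∑ i ∈ Finset.range j.val, r i ≠ c.val) →
      ∀ t : Fin k, A t c = 0) :
    (∀ j : Fin n',
      nlhbF p n g (Matrix.vecMul m A)
          ⟨j.val + ∑ i ∈ Finset.range j.val, r i, hpos j⟩
        = Matrix.vecMul m G j) ∧
    (∀ d : Fin (n - p),
      (∀ j : Fin n', j.val + ∑ i ∈ Finset.range j.val, r i ≠ d.val) →
      nlhbF p n g (Matrix.vecMul m A) d = 0) := by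
  have hgap : ∀ a b : Fin n', a.val < b.val →
      (a.val + ∑ i ∈ Finset.range a.val, r i) + p ≤ b.val + ∑ i ∈ Finset.range b.val, r i := by
    intro a b hab
    have ha : a.val < n' - 1 := by have := b.isLt; omega
    have hra := hr a.val ha
    have hs : ∑ i ∈ Finset.range (a.val + 1), r i ≤ ∑ i ∈ Finset.range b.val, r i :=
      Finset.sum_le_sum_of_subset (Finset.range_subset_range.2 (by omega))
    rw [Finset.sum_range_succ] at hs
    omega
  have hx0 : ∀ c : Fin n,
      (∀ j : Fin n', j.val + ∑ i ∈ Finset.range j.val, r i ≠ c.val) →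
      Matrix.vecMul m A c = 0 := by
    intro c hc
    simp only [Matrix.vecMul, dotProduct]
    apply Finset.sum_eq_zero
    intro t _
    rw [hA0 c hc t, mul_zero]
  have hwin : ∀ s : ℕ, ∀ hs : s + p ≤ n,
      g (fun t : Fin p => Matrix.vecMul m A ⟨s + t.val, by have := t.isLt; omega⟩) = 0 := by
    intro s hs
    apply hg
    rw [hammingNorm, Finset.card_le_one]
    intro t ht t' ht'
    simp only [Finset.mem_filter, Finset.mem_univ, true_and] at ht ht'
    have e1 : ∃ j : Fin n', j.val + ∑ i ∈ Finset.range j.val, r i = s + t.val := by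
      by_contra h; push_neg at h
      exact ht (hx0 ⟨s + t.val, by have := t.isLt; omega⟩ h)
    have e2 : ∃ j : Fin n', j.val + ∑ i ∈ Finset.range j.val, r i = s + t'.val := by
      by_contra h; push_neg at h
      exact ht' (hx0 ⟨s + t'.val, by have := t'.isLt; omega⟩ h)
    obtain ⟨j1, hj1⟩ := e1
    obtain ⟨j2, hj2⟩ := e2
    have ht1 := t.isLt
    have ht2 := t'.isLt
    rcases lt_trichotomy j1.val j2.val with h | h | h
    · have := hgap j1 j2 h; omega
    · have : ∑ i ∈ Finset.range j1.val, r i = ∑ i ∈ Finset.range j2.val, r i := by rw [h]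
      exact Fin.ext (by omega)
    · have := hgap j2 j1 h; omega
  have key : ∀ i : Fin (n - p), nlhbF p n g (Matrix.vecMul m A) i =
      Matrix.vecMul m A ⟨i.val, by have := i.isLt; omega⟩ := by
    intro i
    have hz := hwin (i.val + 1) (by have := i.isLt; omega)
    simp only [nlhbF]
    rw [show (fun t : Fin p => Matrix.vecMul m A
        ⟨i.val + 1 + t.val, by have := i.isLt; have := t.isLt; omega⟩) =
        (fun t : Fin p => Matrix.vecMul m A
        ⟨i.val + 1 + t.val, by have := t.isLt; have := i.isLt; omega⟩) from rfl, hz, add_zero]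
  constructor
  · intro j
    rw [key ⟨j.val + ∑ i ∈ Finset.range j.val, r i, hpos j⟩]
    simp only [Matrix.vecMul, dotProduct]
    apply Finset.sum_congr rfl
    intro t _
    exact congrArg (m t * ·) (hA1 j t)
  · intro d hd
    rw [key d]
    exact hx0 _ hd
end

section
/- (Lemma 1: hyb_i = U_{kn+D} if s_i = 1.) Fix s ∈ {0,1}^k and an index i ∈ {1,…,k} with s_i = 1. Let A be uniformly distributed on the set of binary k × n matrices, let v ∈ {0,1}^D have i.i.d. Bernoulli(ε) bits, and let c be uniformly distributed on {0,1}^n, with A, v, c mutually independent. Let A' be the matrix obtained from A by replacing its i-th row by (i-th row of A) + c (coordinatewise XOR), leaving all other rows unchanged, and let z = f(sA) + v ∈ {0,1}^D. Then the pair (A', z) is uniformly distributed on {0,1}^{k×n} × {0,1}^D; i.e. Pr[A' = Â, z = r] = 2^{−(kn+D)} for every matrix Â and every r ∈ {0,1}^D. -/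
lemma nlhbPhi_inj (p n : ℕ) (hpn : p < n) (g : (Fin p → ZMod 2) → ZMod 2) :
    Function.Injective (fun x : Fin n → ZMod 2 =>
      ((nlhbF p n g x, fun j : Fin p => x ⟨n - p + j.val, by have := j.isLt; omega⟩) :
        (Fin (n - p) → ZMod 2) × (Fin p → ZMod 2))) := by
  intro x y h
  have h1 : nlhbF p n g x = nlhbF p n g y := congrArg Prod.fst h
  have h2 : ∀ j : Fin p, x ⟨n - p + j.val, by have := j.isLt; omega⟩ =
      y ⟨n - p + j.val, by have := j.isLt; omega⟩ := fun j =>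
    congrFun (congrArg Prod.snd h) j
  have key : ∀ m : ℕ, ∀ j : Fin n, n ≤ j.val + m → x j = y j := by
    intro m
    induction m with
    | zero => intro j hj; exact absurd hj (by have := j.isLt; omega)
    | succ m ih =>
      intro j hj
      by_cases hcase : n - p ≤ j.val
      · have hlt : j.val - (n - p) < p := by have := j.isLt; omega
        have := h2 ⟨j.val - (n - p), hlt⟩
        convert this using 2 <;> · apply Fin.ext; simp; omega
      · push_neg at hcase
        have hjD : j.val < n - p := hcase
        have := congrFun h1 ⟨j.val, hjD⟩
        unfold nlhbF at this
        have harg : (fun t : Fin p => x ⟨j.val + 1 + t.val, by have := t.isLt; omega⟩) =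
            (fun t : Fin p => y ⟨j.val + 1 + t.val, by have := t.isLt; omega⟩) := by
          funext t
          exact ih ⟨j.val + 1 + t.val, by have := t.isLt; omega⟩
            (by simp only [Fin.val_mk]; omega)
        rw [harg] at this
        have hx : x ⟨j.val, by omega⟩ = y ⟨j.val, by omega⟩ := add_right_cancel this
        convert hx using 2
  funext j
  exact key n j (by omega)

lemma nlhbF_fiber_card (p n : ℕ) (hpn : p < n) (g : (Fin p → ZMod 2) → ZMod 2)
    (w : Fin (n - p) → ZMod 2) :
    (Finset.univ.filter (fun x : Fin n → ZMod 2 => nlhbF p n g x = w)).card = 2 ^ p := by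
  set Φ := fun x : Fin n → ZMod 2 =>
      ((nlhbF p n g x, fun j : Fin p => x ⟨n - p + j.val, by have := j.isLt; omega⟩) :
        (Fin (n - p) → ZMod 2) × (Fin p → ZMod 2)) with hΦ
  have hinj := nlhbPhi_inj p n hpn g
  have hbij : Function.Bijective Φ := by
    rw [Fintype.bijective_iff_injective_and_card]
    refine ⟨hinj, ?_⟩
    simp [Fintype.card_prod, ← pow_add]
    omega
  have hcard : (Finset.univ.filter (fun x : Fin n → ZMod 2 => nlhbF p n g x = w)).card =
      (Finset.univ.filter (fun q : (Fin (n - p) → ZMod 2) × (Fin p → ZMod 2) => q.1 = w)).card := by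
    apply Finset.card_bij (fun x _ => Φ x)
    · intro x hx
      simp only [Finset.mem_filter, Finset.mem_univ, true_and] at hx ⊢
      exact hx
    · intro x _ y _ hxy; exact hinj hxy
    · intro q hq
      obtain ⟨x, hx⟩ := hbij.2 q
      refine ⟨x, ?_, hx⟩
      simp only [Finset.mem_filter, Finset.mem_univ, true_and] at hq ⊢
      rw [← hx] at hq
      exact hq
  rw [hcard]
  have : (Finset.univ.filter (fun q : (Fin (n - p) → ZMod 2) × (Fin p → ZMod 2) => q.1 = w)) =
      Finset.map ⟨fun b => (w, b), fun a b hab => (Prod.mk.injEq _ _ _ _ ▸ hab).2⟩ Finset.univ := by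
    ext q
    simp [eq_comm, Prod.ext_iff]
    exact ⟨fun h => ⟨q.2, h.symm, rfl⟩, fun ⟨a, h1, _⟩ => h1.symm⟩
  rw [this]
  simp

/-- summing a function of `nlhbF x` over all `x` counts each fiber `2^p` times -/
lemma sum_comp_nlhbF (p n : ℕ) (hpn : p < n) (g : (Fin p → ZMod 2) → ZMod 2)
    (F : (Fin (n - p) → ZMod 2) → ENNReal) :
    ∑ x : Fin n → ZMod 2, F (nlhbF p n g x) =
      2 ^ p * ∑ w : Fin (n - p) → ZMod 2, F w := by
  classical
  rw [← Finset.sum_fiberwise Finset.univ (nlhbF p n g) (fun x => F (nlhbF p n g x))]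
  rw [Finset.mul_sum]
  refine Finset.sum_congr rfl fun w _ => ?_
  have : ∀ x ∈ Finset.univ.filter (fun x : Fin n → ZMod 2 => nlhbF p n g x = w),
      F (nlhbF p n g x) = F w := by
    intro x hx
    simp only [Finset.mem_filter] at hx
    rw [hx.2]
  rw [Finset.sum_congr rfl this, Finset.sum_const, nlhbF_fiber_card p n hpn g w]
  simp [mul_comm]

lemma vecMul_updateRow_split {k n : ℕ} (s : Fin k → ZMod 2) (i : Fin k) (hs : s i = 1)
    (B : Matrix (Fin k) (Fin n) (ZMod 2)) (a : Fin n → ZMod 2) :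
    Matrix.vecMul s (B.updateRow i a) =
      a + Matrix.vecMul s (B.updateRow i 0) := by
  funext x
  simp only [Matrix.vecMul, dotProduct, Pi.add_apply, Matrix.updateRow_apply]
  rw [← Finset.add_sum_erase _ _ (Finset.mem_univ i),
    ← Finset.add_sum_erase _ (fun j => s j * _) (Finset.mem_univ i)]
  simp only [if_pos rfl, hs, one_mul, if_true, Pi.zero_apply, mul_zero, zero_add]
  congr 1
  refine Finset.sum_congr rfl fun j hj => ?_
  have hji : j ≠ i := Finset.ne_of_mem_erase hj
  simp [hji]

lemma pmf_pure_apply_dec {α : Type*} [DecidableEq α] (a b : α) :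
    (PMF.pure a) b = if b = a then 1 else 0 := by
  by_cases h : b = a <;> simp [h]

/-- Lemma 1: Fix a secret `s` with `s_i = 1`.  With `A` uniform on `k × n`
binary matrices, `v` an i.i.d. Bernoulli(ε) noise vector, `c` uniform on `{0,1}^n`, all
independent, let `A'` be `A` with its `i`-th row replaced by `(A)_i + c`, and
`z = f(sA) + v`.  Then `(A', z)` is uniform: `Pr[(A', z) = (Â, r)] = 2^{−(kn+D)}`
for every `Â` and `r`. -/
theorem nlhb_hyb_uniform (p n k : ℕ) (hp : 1 ≤ p) (hpn : p < n)
    (g : (Fin p → ZMod 2) → ZMod 2)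
    (ε : ENNReal) (hε0 : 0 < ε) (hε : ε < 1 / 2)
    (ν : PMF (Fin (n - p) → ZMod 2))
    (hν : ∀ w, ν w = ∏ i, (if w i = 1 then ε else 1 - ε))
    (s : Fin k → ZMod 2) (i : Fin k) (hs : s i = 1)
    (Ahat : Matrix (Fin k) (Fin n) (ZMod 2)) (rvec : Fin (n - p) → ZMod 2) :
    ((do
      let A ← PMF.uniformOfFintype (Matrix (Fin k) (Fin n) (ZMod 2))
      let v ← ν
      let c ← PMF.uniformOfFintype (Fin n → ZMod 2)
      return (Matrix.updateRow A i (A i + c),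
              nlhbF p n g (Matrix.vecMul s A) + v)) :
        PMF (Matrix (Fin k) (Fin n) (ZMod 2) × (Fin (n - p) → ZMod 2)))
      (Ahat, rvec)
    = ((2 : ENNReal) ^ (k * n + (n - p)))⁻¹ := by
  show (PMF.bind (PMF.uniformOfFintype (Matrix (Fin k) (Fin n) (ZMod 2))) fun A =>
      PMF.bind ν fun v =>
      PMF.bind (PMF.uniformOfFintype (Fin n → ZMod 2)) fun c =>
      PMF.pure (Matrix.updateRow A i (A i + c),
              nlhbF p n g (Matrix.vecMul s A) + v)) (Ahat, rvec) = _
  simp only [PMF.bind_apply, pmf_pure_apply_dec, PMF.uniformOfFintype_apply, tsum_fintype]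
  have hcardM : ((Fintype.card (Matrix (Fin k) (Fin n) (ZMod 2)) : ENNReal)) = 2 ^ (k * n) := by
    have : Fintype.card (Matrix (Fin k) (Fin n) (ZMod 2)) = 2 ^ (k * n) := by
      show Fintype.card (Fin k → Fin n → ZMod 2) = _
      simp
      rw [← pow_mul, mul_comm]
    rw [this]; push_cast; ring
  have hcardV : ((Fintype.card (Fin n → ZMod 2) : ENNReal)) = 2 ^ n := by
    simp
  -- step 1: inner sum over c
  have hc : ∀ (A : Matrix (Fin k) (Fin n) (ZMod 2)) (v : Fin (n - p) → ZMod 2),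
      (∑ c : Fin n → ZMod 2,
        ((Fintype.card (Fin n → ZMod 2) : ENNReal))⁻¹ *
          (if (Ahat, rvec) = (A.updateRow i (A i + c), nlhbF p n g (Matrix.vecMul s A) + v)
            then 1 else 0)) =
      ((2 : ENNReal) ^ n)⁻¹ *
        (if A.updateRow i (Ahat i) = Ahat ∧ v = rvec - nlhbF p n g (Matrix.vecMul s A)
          then 1 else 0) := by
    intro A v
    rw [← Finset.mul_sum, hcardV]
    congr 1
    have hiff : ∀ c : Fin n → ZMod 2,
        ((Ahat, rvec) = (A.updateRow i (A i + c), nlhbF p n g (Matrix.vecMul s A) + v)) ↔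
        (c = Ahat i - A i ∧
          (A.updateRow i (Ahat i) = Ahat ∧ v = rvec - nlhbF p n g (Matrix.vecMul s A))) := by
      intro c
      rw [Prod.ext_iff]
      simp only [eq_comm (a := Ahat), eq_comm (a := rvec)]
      constructor
      · rintro ⟨h1, h2⟩
        have hrow : A i + c = Ahat i := by
          have := congrFun h1 i
          rwa [Matrix.updateRow_self] at this
        have hcval : c = Ahat i - A i := by rw [← hrow]; abel
        refine ⟨hcval, ?_, ?_⟩
        · rw [← hrow]; exact h1
        · rw [eq_sub_iff_add_eq, add_comm]; exact h2
      · rintro ⟨hcval, hA, hv⟩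
        subst hcval
        constructor
        · rw [show A i + (Ahat i - A i) = Ahat i by abel]; exact hA
        · rw [eq_sub_iff_add_eq, add_comm] at hv; exact hv
    simp_rw [hiff, ite_and]
    simp
  simp_rw [hc]
  -- step 2: sum over v
  have hv : ∀ (A : Matrix (Fin k) (Fin n) (ZMod 2)),
      (∑ v : Fin (n - p) → ZMod 2, ν v *
        (((2 : ENNReal) ^ n)⁻¹ *
          (if A.updateRow i (Ahat i) = Ahat ∧ v = rvec - nlhbF p n g (Matrix.vecMul s A)
            then 1 else 0))) =
      ((2 : ENNReal) ^ n)⁻¹ *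
        (if A.updateRow i (Ahat i) = Ahat
          then ν (rvec - nlhbF p n g (Matrix.vecMul s A)) else 0) := by
    intro A
    by_cases hA : A.updateRow i (Ahat i) = Ahat
    · simp only [hA, true_and, if_true]
      simp [mul_ite, mul_one, mul_zero, Finset.sum_ite_eq', mul_comm]
    · simp [hA]
  simp_rw [hv]
  rw [← Finset.mul_sum, ← Finset.mul_sum, hcardM]
  -- step 3: sum over A
  have fact2 : ∀ a : Fin n → ZMod 2, (Ahat.updateRow i a).updateRow i (Ahat i) = Ahat := by
    intro a; ext j x; by_cases h : j = i <;> simp [Matrix.updateRow_apply, h]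
  have fact1 : ∀ A : Matrix (Fin k) (Fin n) (ZMod 2),
      A.updateRow i (Ahat i) = Ahat → Ahat.updateRow i (A i) = A := by
    intro A hA; ext j x
    by_cases h : j = i
    · subst h; simp [Matrix.updateRow_apply]
    · simp only [Matrix.updateRow_apply, if_neg h]
      have := congrFun (congrFun hA j) x
      rw [Matrix.updateRow_apply, if_neg h] at this
      exact this.symm
  have hAsum : (∑ A : Matrix (Fin k) (Fin n) (ZMod 2),
      (if A.updateRow i (Ahat i) = Ahat
        then ν (rvec - nlhbF p n g (Matrix.vecMul s A)) else 0)) = 2 ^ p := by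
    rw [← Finset.sum_filter]
    have hb : (∑ A ∈ Finset.univ.filter
          (fun A : Matrix (Fin k) (Fin n) (ZMod 2) => A.updateRow i (Ahat i) = Ahat),
        ν (rvec - nlhbF p n g (Matrix.vecMul s A))) =
        ∑ a : Fin n → ZMod 2,
          ν (rvec - nlhbF p n g (Matrix.vecMul s (Ahat.updateRow i a))) :=
      Finset.sum_nbij' (i := fun A : Matrix (Fin k) (Fin n) (ZMod 2) => A i)
      (j := fun a : Fin n → ZMod 2 => Ahat.updateRow i a)
      (hi := fun A _ => Finset.mem_univ _)
      (hj := fun a _ => by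
        simp only [Finset.mem_filter, Finset.mem_univ, true_and]; exact fact2 a)
      (left_neg := fun A hA => by
        simp only [Finset.mem_filter, Finset.mem_univ, true_and] at hA
        exact fact1 A hA)
      (right_neg := fun a _ => by simp [Matrix.updateRow_self])
      (h := fun A hA => by
        simp only [Finset.mem_filter, Finset.mem_univ, true_and] at hA
        rw [fact1 A hA])
    rw [hb]
    have hsplit : ∀ a : Fin n → ZMod 2,
        ν (rvec - nlhbF p n g (Matrix.vecMul s (Ahat.updateRow i a))) =
        ν (rvec - nlhbF p n g (a + Matrix.vecMul s (Ahat.updateRow i 0))) := fun a => by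
      rw [vecMul_updateRow_split s i hs Ahat a]
    rw [Finset.sum_congr rfl fun a _ => hsplit a]
    refine (Fintype.sum_equiv (Equiv.addRight (Matrix.vecMul s (Ahat.updateRow i 0)))
      (fun a => ν (rvec - nlhbF p n g (a + Matrix.vecMul s (Ahat.updateRow i 0))))
      (fun x => ν (rvec - nlhbF p n g x)) (fun a => rfl)).trans ?_
    refine (sum_comp_nlhbF p n hpn g (fun w => ν (rvec - w))).trans ?_
    have heq : (∑ w : Fin (n - p) → ZMod 2, ν (rvec - w)) = ∑ w : Fin (n - p) → ZMod 2, ν w :=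
      Fintype.sum_equiv (Equiv.subLeft rvec) _ _ (fun w => rfl)
    have h1 : (∑ w : Fin (n - p) → ZMod 2, ν w) = 1 := by
      have := ν.tsum_coe
      rwa [tsum_fintype] at this
    rw [heq, h1, mul_one]
  rw [hAsum]
  -- final arithmetic
  have h2n : ((2 : ENNReal)) ^ n = 2 ^ (n - p) * 2 ^ p := by
    rw [← pow_add]; congr 1; omega
  rw [h2n, ENNReal.mul_inv (Or.inl (pow_ne_zero _ two_ne_zero))
      (Or.inl (ENNReal.pow_ne_top ENNReal.ofNat_ne_top)),
    mul_assoc ((2 : ENNReal) ^ (n - p))⁻¹,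
    ENNReal.inv_mul_cancel (pow_ne_zero _ two_ne_zero) (ENNReal.pow_ne_top ENNReal.ofNat_ne_top),
    mul_one,
    ← ENNReal.mul_inv (Or.inl (pow_ne_zero _ two_ne_zero))
      (Or.inl (ENNReal.pow_ne_top ENNReal.ofNat_ne_top)),
    ← pow_add]
end

section
/- Let W be a random vector in {0,1}^D and let e ∈ {0,1}^D be independent of W with i.i.d. Bernoulli(ε) bits, where 0 < ε ≤ 1/2. Let u, u' be nonnegative integers such that Pr[wt(W) ≤ u] > 0 and Pr[wt(W) = u] > 0. Then Pr[wt(W + e) ≤ u' | wt(W) ≤ u] ≥ Pr[wt(W + e) ≤ u' | wt(W) = u], where + denotes coordinatewise XOR. -/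
open Finset Function

section Aux
variable {D : ℕ}

lemma zmod2_cases (x : ZMod 2) : x = 0 ∨ x = 1 := by revert x; decide
lemma zmod2_ne_zero {x : ZMod 2} : x ≠ 0 ↔ x = 1 := by revert x; decide

lemma hn_def (v : Fin D → ZMod 2) :
    hammingNorm v = (univ.filter (fun i => v i ≠ 0)).card := by
  simp [hammingNorm]

noncomputable def nuF (ε : ENNReal) (e : Fin D → ZMod 2) : ENNReal :=
  ∏ i, (if e i = 1 then ε else 1 - ε)

noncomputable def fF (ε : ENNReal) (u' : ℕ) (w : Fin D → ZMod 2) : ENNReal :=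
  ∑ e : Fin D → ZMod 2, if hammingNorm (w + e) ≤ u' then nuF ε e else 0

lemma hn_comp (σ : Equiv.Perm (Fin D)) (v : Fin D → ZMod 2) :
    hammingNorm (fun i => v (σ i)) = hammingNorm v := by
  rw [hn_def, hn_def]
  apply Finset.card_equiv σ
  intro i
  simp

lemma nuF_comp (ε : ENNReal) (σ : Equiv.Perm (Fin D)) (e : Fin D → ZMod 2) :
    nuF ε (fun i => e (σ i)) = nuF ε e := by
  unfold nuF
  exact Fintype.prod_equiv σ _ _ (fun i => rfl)

lemma fF_comp (ε : ENNReal) (u' : ℕ) (σ : Equiv.Perm (Fin D)) (w : Fin D → ZMod 2) :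
    fF ε u' (fun i => w (σ i)) = fF ε u' w := by
  unfold fF
  apply Fintype.sum_equiv (Equiv.arrowCongr σ (Equiv.refl (ZMod 2)))
  intro e
  have he : (Equiv.arrowCongr σ (Equiv.refl (ZMod 2))) e = fun j => e (σ.symm j) := rfl
  have h1 : (fun i => w (σ i)) + e = fun i => (w + fun j => e (σ.symm j)) (σ i) := by
    funext i; simp
  rw [he, h1, hn_comp σ, nuF_comp ε σ.symm e]


lemma hn_update_one {v : Fin D → ZMod 2} {k : Fin D} (h : v k = 0) :
    hammingNorm (update v k 1) = hammingNorm v + 1 := by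
  rw [hn_def, hn_def]
  have hset : (univ.filter (fun i => update v k 1 i ≠ 0))
      = insert k (univ.filter (fun i => v i ≠ 0)) := by
    ext i
    by_cases hik : i = k
    · subst hik; simp [update_self]
    · simp [update_of_ne hik, hik]
  rw [hset, card_insert_of_notMem (by simp [h])]

lemma sum_pair (k : Fin D) (F : (Fin D → ZMod 2) → ENNReal) :
    ∑ e : Fin D → ZMod 2, F e
      = ∑ e ∈ univ.filter (fun e => e k = 0), (F e + F (update e k 1)) := by
  rw [Finset.sum_add_distrib,
    ← Finset.sum_filter_add_sum_filter_not univ (fun e => e k = 0) F]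
  congr 1
  apply Finset.sum_nbij' (i := fun e => update e k 0) (j := fun e => update e k 1)
  · intro e he
    simp only [mem_filter, mem_univ, true_and] at he ⊢
    simp [update_self]
  · intro e he
    simp only [mem_filter, mem_univ, true_and] at he ⊢
    simp [update_self]
  · intro e he
    simp only [mem_filter, mem_univ, true_and] at he
    have he1 : e k = 1 := zmod2_ne_zero.mp he
    funext i
    by_cases hik : i = k
    · subst hik; simp [update_self, he1]
    · simp [update_of_ne hik]
  · intro e he
    simp only [mem_filter, mem_univ, true_and] at he
    funext i
    by_cases hik : i = k
    · subst hik; simp [update_self, he]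
    · simp [update_of_ne hik]
  · intro e he
    simp only [mem_filter, mem_univ, true_and] at he
    have he1 : e k = 1 := zmod2_ne_zero.mp he
    congr 1
    funext i
    by_cases hik : i = k
    · subst hik; simp [update_self, he1]
    · simp [update_of_ne hik]

lemma fF_flip (ε : ENNReal) (hε : ε ≤ 1 / 2) (u' : ℕ) (w : Fin D → ZMod 2) (k : Fin D)
    (hw : w k = 0) : fF ε u' (update w k 1) ≤ fF ε u' w := by
  have hεle : ε ≤ 1 - ε := by
    calc ε ≤ 1 / 2 := hε
    _ = 1 - 1 / 2 := by rw [ENNReal.sub_half ENNReal.one_ne_top]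
    _ ≤ 1 - ε := tsub_le_tsub_left hε 1
  unfold fF
  rw [sum_pair k, sum_pair k]
  apply Finset.sum_le_sum
  intro e he
  have hek : e k = 0 := by
    simpa using (Finset.mem_filter.mp he).2
  set ρ := ∏ i ∈ ({k}ᶜ : Finset (Fin D)), (if e i = 1 then ε else 1 - ε) with hρ
  have hν0 : nuF ε e = (1 - ε) * ρ := by
    rw [nuF, Fintype.prod_eq_mul_prod_compl k]
    congr 1
    simp [hek]
  have hν1 : nuF ε (update e k 1) = ε * ρ := by
    rw [nuF, Fintype.prod_eq_mul_prod_compl k]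
    congr 1
    · simp [update_self]
    · apply Finset.prod_congr rfl
      intro i hi
      rw [update_of_ne (Finset.mem_compl.mp hi ∘ Finset.mem_singleton.mpr ∘ congrArg id)]
  have h1 : update w k 1 + e = update (w + e) k 1 := by
    funext i
    by_cases hik : i = k
    · subst hik; simp [update_self, hek]
    · simp [update_of_ne hik]
  have h2 : w + update e k 1 = update (w + e) k 1 := by
    funext i
    by_cases hik : i = k
    · subst hik; simp [update_self, hw]
    · simp [update_of_ne hik]
  have h3 : update w k 1 + update e k 1 = w + e := by
    funext i
    by_cases hik : i = k
    · subst hik; simp [update_self, hw, hek]; decide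
    · simp [update_of_ne hik]
  have hwe : (w + e) k = 0 := by simp [Pi.add_apply, hw, hek]
  have hR1 : hammingNorm (update (w + e) k 1) = hammingNorm (w + e) + 1 :=
    hn_update_one hwe
  rw [h1, h2, h3, hR1, hν0, hν1]
  set R := hammingNorm (w + e)
  by_cases hA : R + 1 ≤ u'
  · have hB : R ≤ u' := by omega
    simp only [hA, hB, if_true]
    rw [add_comm]
  · by_cases hB : R ≤ u'
    · simp only [hA, hB, if_true, if_false]
      simpa using mul_le_mul_left hεle ρ
    · simp [hA, hB]

lemma exists_perm {w w' : Fin D → ZMod 2} (h : hammingNorm w = hammingNorm w') :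
    ∃ σ : Equiv.Perm (Fin D), ∀ i, w (σ i) = w' i := by
  classical
  have hc1 : Fintype.card {i // w' i ≠ 0} = Fintype.card {i // w i ≠ 0} := by
    rw [Fintype.card_subtype, Fintype.card_subtype]
    simpa [hammingNorm] using h.symm
  have hc2 : Fintype.card {i // ¬ w' i ≠ 0} = Fintype.card {i // ¬ w i ≠ 0} := by
    rw [Fintype.card_subtype_compl (fun i => w' i ≠ 0),
      Fintype.card_subtype_compl (fun i => w i ≠ 0), hc1]
  set ep := Fintype.equivOfCardEq hc1
  set en := Fintype.equivOfCardEq hc2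
  refine ⟨Equiv.subtypeCongr ep en, fun i => ?_⟩
  have happ : ∀ a, Equiv.subtypeCongr ep en a =
      if h : w' a ≠ 0 then (ep ⟨a, h⟩ : Fin D) else (en ⟨a, h⟩ : Fin D) := by
    intro a; by_cases h : w' a ≠ 0 <;> simp [Equiv.subtypeCongr, h]
  by_cases hi : w' i ≠ 0
  · rw [happ, dif_pos hi]
    have h1 : w ((ep ⟨i, hi⟩ : {j // w j ≠ 0}) : Fin D) ≠ 0 := (ep ⟨i, hi⟩).2
    rw [zmod2_ne_zero.mp h1, zmod2_ne_zero.mp hi]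
  · rw [happ, dif_neg hi]
    have h1 : ¬ w ((en ⟨i, hi⟩ : {j // ¬ w j ≠ 0}) : Fin D) ≠ 0 := (en ⟨i, hi⟩).2
    rw [not_not] at h1 hi
    rw [h1, hi]

lemma fF_mono_supp (ε : ENNReal) (hε : ε ≤ 1 / 2) (u' : ℕ) :
    ∀ (n : ℕ) (w w'' : Fin D → ZMod 2),
      (univ.filter (fun i => w'' i ≠ 0) \ univ.filter (fun i => w i ≠ 0)).card = n →
      (∀ i, w i ≠ 0 → w'' i ≠ 0) → fF ε u' w'' ≤ fF ε u' w := by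
  intro n
  induction n with
  | zero =>
    intro w w'' hcard hsub
    have hemp : (univ.filter (fun i => w'' i ≠ 0) \ univ.filter (fun i => w i ≠ 0)) = ∅ :=
      Finset.card_eq_zero.mp hcard
    have hrev : ∀ i, w'' i ≠ 0 → w i ≠ 0 := by
      intro i hi
      by_contra hwi
      have : i ∈ (univ.filter (fun i => w'' i ≠ 0) \ univ.filter (fun i => w i ≠ 0)) := by
        simp [hi, hwi]
      rw [hemp] at this
      exact absurd this (Finset.notMem_empty i)
    have : w'' = w := by
      funext i
      rcases zmod2_cases (w i) with h0 | h1
      · rcases zmod2_cases (w'' i) with g0 | g1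
        · rw [h0, g0]
        · exact absurd (hrev i (by rw [g1]; decide)) (by rw [h0]; simp)
      · rw [h1, zmod2_ne_zero.mp (hsub i (by rw [h1]; decide))]
    rw [this]
  | succ n ih =>
    intro w w'' hcard hsub
    obtain ⟨k, hk⟩ : (univ.filter (fun i => w'' i ≠ 0) \
        univ.filter (fun i => w i ≠ 0)).Nonempty :=
      Finset.card_pos.mp (by omega)
    have hk1 : w'' k ≠ 0 := by
      have := Finset.mem_sdiff.mp hk
      simpa using this.1
    have hk2 : w k = 0 := by
      have := Finset.mem_sdiff.mp hk
      have := this.2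
      simp only [Finset.mem_filter, Finset.mem_univ, true_and, not_not] at this
      exact this
    refine le_trans ?_ (fF_flip ε hε u' w k hk2)
    apply ih (update w k 1) w''
    · have hins : univ.filter (fun i => update w k 1 i ≠ 0)
          = insert k (univ.filter (fun i => w i ≠ 0)) := by
        ext i
        by_cases hik : i = k
        · subst hik; simp [update_self]
        · simp [update_of_ne hik, hik]
      rw [hins, Finset.sdiff_insert, Finset.card_erase_of_mem hk, hcard]
      omega
    · intro i hi
      by_cases hik : i = k
      · subst hik; exact hk1
      · rw [update_of_ne hik] at hi
        exact hsub i hi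

lemma fF_mono (ε : ENNReal) (hε : ε ≤ 1 / 2) (u' : ℕ) {w w' : Fin D → ZMod 2}
    (h : hammingNorm w ≤ hammingNorm w') : fF ε u' w' ≤ fF ε u' w := by
  classical
  have hle2 : hammingNorm w' ≤ (univ : Finset (Fin D)).card := by
    rw [Finset.card_univ, Fintype.card_fin]
    exact hammingNorm_le_card_fintype.trans (by rw [Fintype.card_fin])
  obtain ⟨S, hsubS, -, hcardS⟩ := Finset.exists_subsuperset_card_eq
    (Finset.subset_univ (univ.filter (fun i => w i ≠ 0)))
    (by rw [← hn_def]; exact h) hle2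
  set w'' : Fin D → ZMod 2 := fun i => if i ∈ S then 1 else 0 with hw''
  have hfil : univ.filter (fun i => w'' i ≠ 0) = S := by
    ext i
    by_cases hiS : i ∈ S <;> simp [hw'', hiS]
  have hn'' : hammingNorm w'' = hammingNorm w' := by
    rw [hn_def, hfil, hcardS]
  have h1 : fF ε u' w'' ≤ fF ε u' w := by
    apply fF_mono_supp ε hε u' _ w w'' rfl
    intro i hi
    have : i ∈ S := hsubS (by simp [hi])
    simp [hw'', this]
  have h2 : fF ε u' w' = fF ε u' w'' := by
    obtain ⟨σ, hσ⟩ := exists_perm hn''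
    rw [show w' = fun i => w'' (σ i) from funext fun i => (hσ i).symm, fF_comp]
  rw [h2]
  exact h1

/-- Let `W` have an arbitrary distribution `μ` on `{0,1}^D` and let `e` be an
independent i.i.d. Bernoulli(ε) vector, `0 < ε ≤ 1/2`.  If `Pr[wt(W) ≤ u] > 0` and
`Pr[wt(W) = u] > 0`, then
`Pr[wt(W+e) ≤ u' | wt(W) ≤ u] ≥ Pr[wt(W+e) ≤ u' | wt(W) = u]`. -/
theorem cond_weight_mono (D : ℕ) (ε : ENNReal) (hε0 : 0 < ε) (hε : ε ≤ 1 / 2)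
    (μ : PMF (Fin D → ZMod 2)) (ν : PMF (Fin D → ZMod 2))
    (hν : ∀ e, ν e = ∏ i, (if e i = 1 then ε else 1 - ε))
    (u u' : ℕ)
    (P : PMF ((Fin D → ZMod 2) × (Fin D → ZMod 2)))
    (hP : P = do
      let w ← μ
      let e ← ν
      return (w, e))
    (hle : 0 < P.toOuterMeasure {q | hammingNorm q.1 ≤ u})
    (heq : 0 < P.toOuterMeasure {q | hammingNorm q.1 = u}) :
    P.toOuterMeasure {q | hammingNorm (q.1 + q.2) ≤ u' ∧ hammingNorm q.1 = u}
        / P.toOuterMeasure {q | hammingNorm q.1 = u}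
      ≤ P.toOuterMeasure {q | hammingNorm (q.1 + q.2) ≤ u' ∧ hammingNorm q.1 ≤ u}
        / P.toOuterMeasure {q | hammingNorm q.1 ≤ u} := by
  classical
  have hPapp : ∀ w e, P (w, e) = μ w * ν e := by
    intro w e
    rw [hP]
    show (μ.bind fun w => ν.bind fun e => PMF.pure (w, e)) (w, e) = μ w * ν e
    rw [PMF.bind_apply]
    have hinner : ∀ a, (ν.bind fun b => PMF.pure (a, b)) (w, e)
        = if a = w then ν e else 0 := by
      intro a
      rw [PMF.bind_apply]
      by_cases ha : a = w
      · subst ha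
        rw [if_pos rfl, tsum_eq_single e ?_]
        · rw [PMF.pure_apply, if_pos rfl, mul_one]
        · intro b hb
          rw [PMF.pure_apply, if_neg (by simp [Prod.ext_iff, Ne.symm hb]), mul_zero]
      · rw [if_neg ha]
        have hz : ∀ b, ν b * ((PMF.pure (a, b)) (w, e)) = 0 := by
          intro b
          rw [PMF.pure_apply, if_neg (fun h => ha (congrArg Prod.fst h).symm), mul_zero]
        simp only [hz, tsum_zero]
    rw [tsum_eq_single w (fun a ha => by rw [hinner a, if_neg ha, mul_zero])]
    rw [hinner w, if_pos rfl]
  have hνsum : ∑ e : Fin D → ZMod 2, ν e = 1 := by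
    have := ν.tsum_coe; rwa [tsum_fintype] at this
  have hμsum : ∑ w : Fin D → ZMod 2, μ w = 1 := by
    have := μ.tsum_coe; rwa [tsum_fintype] at this
  have hkey : ∀ S : Set ((Fin D → ZMod 2) × (Fin D → ZMod 2)),
      P.toOuterMeasure S = ∑ w : Fin D → ZMod 2, ∑ e : Fin D → ZMod 2,
        if (w, e) ∈ S then μ w * ν e else 0 := by
    intro S
    rw [PMF.toOuterMeasure_apply, tsum_fintype, Fintype.sum_prod_type]
    refine Finset.sum_congr rfl fun w _ => Finset.sum_congr rfl fun e _ => ?_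
    rw [Set.indicator_apply, hPapp]
  have hfFeq : ∀ w, fF ε u' w
      = ∑ e : Fin D → ZMod 2, if hammingNorm (w + e) ≤ u' then ν e else 0 := by
    intro w
    unfold fF nuF
    refine Finset.sum_congr rfl fun e _ => ?_
    rw [hν e]
  have hmargA : P.toOuterMeasure {q | hammingNorm q.1 = u}
      = ∑ w : Fin D → ZMod 2, if hammingNorm w = u then μ w else 0 := by
    rw [hkey]
    refine Finset.sum_congr rfl fun w _ => ?_
    by_cases hw : hammingNorm w = u
    · simp only [Set.mem_setOf_eq, hw, if_true]
      rw [← Finset.mul_sum, hνsum, mul_one]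
    · simp [Set.mem_setOf_eq, hw]
  have hmargB : P.toOuterMeasure {q | hammingNorm q.1 ≤ u}
      = ∑ w : Fin D → ZMod 2, if hammingNorm w ≤ u then μ w else 0 := by
    rw [hkey]
    refine Finset.sum_congr rfl fun w _ => ?_
    by_cases hw : hammingNorm w ≤ u
    · simp only [Set.mem_setOf_eq, hw, if_true]
      rw [← Finset.mul_sum, hνsum, mul_one]
    · simp [Set.mem_setOf_eq, hw]
  have hjointA : P.toOuterMeasure {q | hammingNorm (q.1 + q.2) ≤ u' ∧ hammingNorm q.1 = u}
      = ∑ w : Fin D → ZMod 2, if hammingNorm w = u then μ w * fF ε u' w else 0 := by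
    rw [hkey]
    refine Finset.sum_congr rfl fun w _ => ?_
    by_cases hw : hammingNorm w = u
    · simp only [Set.mem_setOf_eq, hw, and_true, if_true]
      rw [hfFeq, Finset.mul_sum]
      refine Finset.sum_congr rfl fun e _ => ?_
      rw [mul_ite, mul_zero]
    · simp [Set.mem_setOf_eq, hw]
  have hjointB : P.toOuterMeasure {q | hammingNorm (q.1 + q.2) ≤ u' ∧ hammingNorm q.1 ≤ u}
      = ∑ w : Fin D → ZMod 2, if hammingNorm w ≤ u then μ w * fF ε u' w else 0 := by
    rw [hkey]
    refine Finset.sum_congr rfl fun w _ => ?_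
    by_cases hw : hammingNorm w ≤ u
    · simp only [Set.mem_setOf_eq, hw, and_true, if_true]
      rw [hfFeq, Finset.mul_sum]
      refine Finset.sum_congr rfl fun e _ => ?_
      rw [mul_ite, mul_zero]
    · simp [Set.mem_setOf_eq, hw]
  rw [hmargA] at heq
  rw [hmargB] at hle
  rw [hmargA, hmargB, hjointA, hjointB]
  set a : ENNReal := ∑ w : Fin D → ZMod 2, if hammingNorm w = u then μ w else 0 with ha
  set b : ENNReal := ∑ w : Fin D → ZMod 2, if hammingNorm w ≤ u then μ w else 0 with hb
  have ha1 : a ≤ 1 := by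
    rw [← hμsum]
    apply Finset.sum_le_sum
    intro w _
    split <;> simp
  have hb1 : b ≤ 1 := by
    rw [← hμsum]
    apply Finset.sum_le_sum
    intro w _
    split <;> simp
  have ha0 : a ≠ 0 := ne_of_gt heq
  have hb0 : b ≠ 0 := ne_of_gt hle
  have haT : a ≠ ⊤ := ne_top_of_le_ne_top ENNReal.one_ne_top ha1
  have hbT : b ≠ ⊤ := ne_top_of_le_ne_top ENNReal.one_ne_top hb1
  obtain ⟨w₀, -, hw₀ne⟩ := Finset.exists_ne_zero_of_sum_ne_zero ha0
  have hw₀ : hammingNorm w₀ = u := by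
    by_contra hc
    rw [if_neg hc] at hw₀ne
    exact hw₀ne rfl
  set c : ENNReal := fF ε u' w₀ with hc
  have hconstA : ∀ w : Fin D → ZMod 2, hammingNorm w = u → fF ε u' w = c := by
    intro w hw
    have h1 : hammingNorm w₀ ≤ hammingNorm w := by rw [hw₀, hw]
    have h2 : hammingNorm w ≤ hammingNorm w₀ := by rw [hw₀, hw]
    exact le_antisymm (fF_mono ε hε u' h1) (fF_mono ε hε u' h2)
  have hgeB : ∀ w : Fin D → ZMod 2, hammingNorm w ≤ u → c ≤ fF ε u' w := by
    intro w hw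
    have h1 : hammingNorm w ≤ hammingNorm w₀ := by rw [hw₀]; exact hw
    exact fF_mono ε hε u' h1
  have hnumA : (∑ w : Fin D → ZMod 2, if hammingNorm w = u then μ w * fF ε u' w else 0)
      = a * c := by
    rw [ha, Finset.sum_mul]
    refine Finset.sum_congr rfl fun w _ => ?_
    by_cases hw : hammingNorm w = u
    · rw [if_pos hw, if_pos hw, hconstA w hw]
    · rw [if_neg hw, if_neg hw, zero_mul]
  have hLHS : (∑ w : Fin D → ZMod 2, if hammingNorm w = u then μ w * fF ε u' w else 0) / a
      = c := by
    rw [hnumA, mul_comm, mul_div_assoc, ENNReal.div_self ha0 haT, mul_one]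
  rw [hLHS, ENNReal.le_div_iff_mul_le (Or.inl hb0) (Or.inl hbT)]
  have hcb : c * b = ∑ w : Fin D → ZMod 2, if hammingNorm w ≤ u then c * μ w else 0 := by
    rw [hb, Finset.mul_sum]
    refine Finset.sum_congr rfl fun w _ => ?_
    rw [mul_ite, mul_zero]
  rw [hcb]
  apply Finset.sum_le_sum
  intro w _
  by_cases hw : hammingNorm w ≤ u
  · rw [if_pos hw, if_pos hw, mul_comm]
    exact mul_le_mul_right (hgeB w hw) (μ w)
  · rw [if_neg hw, if_neg hw]
end Aux
end

section
/- Let 0 < ε' < 1/2 and let ε_1 satisfy (1 − (1 − 2ε')²)/2 < ε_1 < 1/2. Set γ = 1 − 2ε', δ_eps = 1 − 2ε_1, and c = (1 − δ_eps)/(γ² − δ_eps) + 1 (note γ² > δ_eps so c is well defined and positive). Let μ be any probability distribution on the set of vectors w ∈ {0,1}^D with wt(w) ≤ ε'·D, and let Δ^{(1)}, Δ^{(2)} be independent samples from μ. Then Pr[d(Δ^{(1)}, Δ^{(2)}) ≤ ε_1·D] ≥ 1/c². -/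
private lemma johnson_real (D : ℕ) (ε1 γ : ℝ)
    (hγpos : 0 < γ) (hγ1 : γ ≤ 1) (hε1pos : 0 < ε1)
    (q : (Fin D → ZMod 2) → ℝ) (hq0 : ∀ a, 0 ≤ q a) (hqsum : ∑ a, q a = 1)
    (hqw : ∀ a, q a ≠ 0 → γ * D ≤ (D : ℝ) - 2 * hammingNorm a) :
    1 - (1 - γ ^ 2) / (2 * ε1) ≤
      ∑ a, ∑ b, q a * q b * (if (hammingDist a b : ℝ) ≤ ε1 * D then (1:ℝ) else 0) := by
  classical
  set χ : ZMod 2 → ℝ := fun x => if x = 0 then 1 else -1 with hχdef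
  have hχmul : ∀ x y : ZMod 2, χ x * χ y = if x = y then (1:ℝ) else -1 := by
    intro x y; have h2 : ∀ z : ZMod 2, z = 0 ∨ z = 1 := by decide
    rcases h2 x with rfl | rfl <;> rcases h2 y with rfl | rfl <;> norm_num [hχdef]
  have hdist : ∀ a b : Fin D → ZMod 2,
      ∑ i, χ (a i) * χ (b i) = (D : ℝ) - 2 * hammingDist a b := by
    intro a b
    have h1 : ∀ i, χ (a i) * χ (b i) = 1 - 2 * (if a i ≠ b i then (1:ℝ) else 0) := by
      intro i; rw [hχmul]; by_cases h : a i = b i <;> norm_num [h]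
    rw [Finset.sum_congr rfl fun i _ => h1 i, Finset.sum_sub_distrib, Finset.sum_const,
      ← Finset.mul_sum, Finset.sum_boole]
    simp [hammingDist]
  have hnorm : ∀ a : Fin D → ZMod 2, ∑ i, χ (a i) = (D : ℝ) - 2 * hammingNorm a := by
    intro a
    have h1 : ∀ i, χ (a i) = 1 - 2 * (if a i ≠ 0 then (1:ℝ) else 0) := by
      intro i; by_cases h : a i = 0 <;> norm_num [hχdef, h]
    rw [Finset.sum_congr rfl fun i _ => h1 i, Finset.sum_sub_distrib, Finset.sum_const,
      ← Finset.mul_sum, Finset.sum_boole]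
    simp [hammingNorm]
  set s : Fin D → ℝ := fun i => ∑ a, q a * χ (a i) with hsdef
  set ind : (Fin D → ZMod 2) → (Fin D → ZMod 2) → ℝ :=
    fun a b => if (hammingDist a b : ℝ) ≤ ε1 * D then (1:ℝ) else 0 with hinddef
  have hind0 : ∀ a b, 0 ≤ ind a b := by
    intro a b; rw [hinddef]; dsimp only; split <;> norm_num
  have hind1 : ∀ a b, ind a b ≤ 1 := by
    intro a b; rw [hinddef]; dsimp only; split <;> norm_num
  -- ∑∑ q a * q b = 1
  have hqq : ∑ a, ∑ b, q a * q b = 1 := by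
    rw [← Finset.sum_mul_sum, hqsum, mul_one]
  -- first moment bound
  have hs1 : γ * D ≤ ∑ i, s i := by
    have hswap : ∑ i, s i = ∑ a, q a * ((D : ℝ) - 2 * hammingNorm a) := by
      rw [show ∑ i, s i = ∑ i, ∑ a, q a * χ (a i) from rfl, Finset.sum_comm]
      exact Finset.sum_congr rfl fun a _ => by rw [← Finset.mul_sum, hnorm]
    rw [hswap]
    calc γ * D = ∑ a, q a * (γ * D) := by rw [← Finset.sum_mul, hqsum, one_mul]
      _ ≤ ∑ a, q a * ((D : ℝ) - 2 * hammingNorm a) := by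
          refine Finset.sum_le_sum fun a _ => ?_
          by_cases h : q a = 0
          · simp [h]
          · exact mul_le_mul_of_nonneg_left (hqw a h) (hq0 a)
  -- second moment identity
  have hsq : ∑ a, ∑ b, q a * q b * ((D : ℝ) - 2 * hammingDist a b) = ∑ i, s i ^ 2 := by
    calc ∑ a, ∑ b, q a * q b * ((D : ℝ) - 2 * hammingDist a b)
        = ∑ a, ∑ b, ∑ i, q a * χ (a i) * (q b * χ (b i)) := by
          refine Finset.sum_congr rfl fun a _ => Finset.sum_congr rfl fun b _ => ?_
          rw [← hdist a b, Finset.mul_sum]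
          exact Finset.sum_congr rfl fun i _ => by ring
      _ = ∑ a, ∑ i, ∑ b, q a * χ (a i) * (q b * χ (b i)) :=
          Finset.sum_congr rfl fun a _ => Finset.sum_comm
      _ = ∑ i, ∑ a, ∑ b, q a * χ (a i) * (q b * χ (b i)) := Finset.sum_comm
      _ = ∑ i, s i ^ 2 := by
          refine Finset.sum_congr rfl fun i _ => ?_
          rw [sq]; exact (Finset.sum_mul_sum _ _ _ _).symm
  -- Cauchy-Schwarz
  have hCS : (γ * D) ^ 2 ≤ (D : ℝ) * ∑ i, s i ^ 2 := by
    have h1 : (∑ i, s i) ^ 2 ≤ (D : ℝ) * ∑ i, s i ^ 2 := by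
      have h := sq_sum_le_card_mul_sum_sq (s := (Finset.univ : Finset (Fin D))) (f := s)
      simpa using h
    have h2 : (γ * D) ^ 2 ≤ (∑ i, s i) ^ 2 :=
      pow_le_pow_left₀ (by positivity) hs1 2
    linarith
  set T : ℝ := ∑ a, ∑ b, q a * q b * (hammingDist a b : ℝ) with hTdef
  have hsplit : ∑ a, ∑ b, q a * q b * ((D : ℝ) - 2 * hammingDist a b)
      = (D : ℝ) * (∑ a, ∑ b, q a * q b) - 2 * T := by
    rw [hTdef, Finset.mul_sum, Finset.mul_sum, ← Finset.sum_sub_distrib]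
    refine Finset.sum_congr rfl fun a _ => ?_
    rw [Finset.mul_sum, Finset.mul_sum, ← Finset.sum_sub_distrib]
    exact Finset.sum_congr rfl fun b _ => by ring
  set P : ℝ := ∑ a, ∑ b, q a * q b * ind a b with hPdef
  show 1 - (1 - γ ^ 2) / (2 * ε1) ≤ P
  rcases Nat.eq_zero_or_pos D with hD0 | hDpos
  · -- D = 0 : every pair is close, P = 1
    have hPone : P = 1 := by
      rw [hPdef, ← hqq]
      refine Finset.sum_congr rfl fun a _ => Finset.sum_congr rfl fun b _ => ?_
      have hd0 : hammingDist a b = 0 := by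
        subst hD0; simp [hammingDist]
      have : ind a b = 1 := by
        rw [hinddef]; dsimp only; rw [if_pos]; rw [hd0, hD0]; norm_num
      rw [this, mul_one]
    have hnn : 0 ≤ (1 - γ ^ 2) / (2 * ε1) :=
      div_nonneg (by nlinarith) (by linarith)
    rw [hPone]; linarith
  · have hDpos' : (0 : ℝ) < D := by exact_mod_cast hDpos
    have h1P : 1 - P = ∑ a, ∑ b, q a * q b * (1 - ind a b) := by
      have h : ∑ a, ∑ b, q a * q b * (1 - ind a b)
          = (∑ a, ∑ b, q a * q b) - P := by
        rw [hPdef, ← Finset.sum_sub_distrib]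
        refine Finset.sum_congr rfl fun a _ => ?_
        rw [← Finset.sum_sub_distrib]
        exact Finset.sum_congr rfl fun b _ => by ring
      rw [h, hqq]
    have hMarkov : ε1 * D * (1 - P) ≤ T := by
      rw [h1P, hTdef, Finset.mul_sum]
      refine Finset.sum_le_sum fun a _ => ?_
      rw [Finset.mul_sum]
      refine Finset.sum_le_sum fun b _ => ?_
      by_cases h : (hammingDist a b : ℝ) ≤ ε1 * D
      · have : ind a b = 1 := by rw [hinddef]; dsimp only; rw [if_pos h]
        rw [this]
        have : (0:ℝ) ≤ q a * q b * (hammingDist a b : ℝ) :=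
          mul_nonneg (mul_nonneg (hq0 a) (hq0 b)) (Nat.cast_nonneg _)
        linarith
      · have hi : ind a b = 0 := by rw [hinddef]; dsimp only; rw [if_neg h]
        have hd : ε1 * D ≤ (hammingDist a b : ℝ) := (not_le.mp h).le
        have := mul_le_mul_of_nonneg_left hd (mul_nonneg (hq0 a) (hq0 b))
        rw [hi]; nlinarith
    have hTb : 2 * T ≤ (1 - γ ^ 2) * D := by
      have h3 : ∑ i, s i ^ 2 = (D : ℝ) - 2 * T := by
        rw [← hsq, hsplit, hqq, mul_one]
      have h4 : (D : ℝ) * (γ ^ 2 * D) ≤ (D : ℝ) * ((D : ℝ) - 2 * T) := by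
        rw [← h3]; nlinarith [hCS]
      have h5 := le_of_mul_le_mul_left h4 hDpos'
      nlinarith
    have key : ε1 * (1 - P) ≤ (1 - γ ^ 2) / 2 := by
      have h5 : (ε1 * (1 - P)) * D ≤ ((1 - γ ^ 2) / 2) * D := by nlinarith
      exact le_of_mul_le_mul_right h5 hDpos'
    have h6 : 1 - P ≤ (1 - γ ^ 2) / (2 * ε1) := by
      rw [le_div_iff₀ (by linarith : (0:ℝ) < 2 * ε1)]; nlinarith
    linarith

/-- Johnson-bound claim: Let `0 < ε' < 1/2` and
`(1 − (1 − 2ε')²)/2 < ε₁ < 1/2`; set `γ = 1 − 2ε'`, `δ_eps = 1 − 2ε₁` and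
`c = (1 − δ_eps)/(γ² − δ_eps) + 1`.  If `μ` is any distribution on vectors of `{0,1}^D`
of Hamming weight at most `ε'·D` and `Δ⁽¹⁾, Δ⁽²⁾` are independent samples from `μ`, then
`Pr[d(Δ⁽¹⁾, Δ⁽²⁾) ≤ ε₁·D] ≥ 1/c²`. -/
theorem johnson_bound_pairs (D : ℕ) (ε' ε1 : ℝ)
    (hε'0 : 0 < ε') (hε' : ε' < 1 / 2)
    (hε1l : (1 - (1 - 2 * ε') ^ 2) / 2 < ε1) (hε1 : ε1 < 1 / 2)
    (γ δeps c : ℝ) (hγ : γ = 1 - 2 * ε') (hδ : δeps = 1 - 2 * ε1)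
    (hc : c = (1 - δeps) / (γ ^ 2 - δeps) + 1)
    (μ : PMF (Fin D → ZMod 2))
    (hμ : ∀ w, μ w ≠ 0 → (hammingNorm w : ℝ) ≤ ε' * D) :
    ENNReal.ofReal (1 / c ^ 2) ≤
      ((do
        let a ← μ
        let b ← μ
        return (a, b)) : PMF ((Fin D → ZMod 2) × (Fin D → ZMod 2))).toOuterMeasure
        {q | (hammingDist q.1 q.2 : ℝ) ≤ ε1 * D} := by
  classical
  -- numeric preliminaries
  have hγpos : 0 < γ := by rw [hγ]; linarith
  have hγ1 : γ ≤ 1 := by rw [hγ]; linarith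
  have hsq1 : (1 - 2 * ε') ^ 2 < 1 := by nlinarith
  have hε1pos : 0 < ε1 := by linarith
  have hgd : δeps < γ ^ 2 := by rw [hδ, hγ]; linarith
  have hgpos : 0 < γ ^ 2 - δeps := by linarith
  have hc1 : 1 < c := by
    have h : 0 < (1 - δeps) / (γ ^ 2 - δeps) :=
      div_pos (by rw [hδ]; linarith) hgpos
    rw [hc]; linarith
  -- the distribution as a real-valued function
  set q : (Fin D → ZMod 2) → ℝ := fun a => (μ a).toReal with hqdef
  have hq0 : ∀ a, 0 ≤ q a := fun a => ENNReal.toReal_nonneg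
  have hqsum : ∑ a, q a = 1 := by
    have h := μ.tsum_coe
    rw [tsum_fintype] at h
    have h2 := congrArg ENNReal.toReal h
    rwa [ENNReal.toReal_sum (fun a _ => μ.apply_ne_top a), ENNReal.toReal_one] at h2
  have hqw : ∀ a, q a ≠ 0 → γ * D ≤ (D : ℝ) - 2 * hammingNorm a := by
    intro a ha
    have hμa : μ a ≠ 0 := by
      intro h; exact ha (by rw [hqdef]; simp [h])
    have := hμ a hμa
    rw [hγ]; nlinarith [this, Nat.cast_nonneg (α := ℝ) D]
  have hreal := johnson_real D ε1 γ hγpos hγ1 hε1pos q hq0 hqsum hqw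
  -- identify the measure with the real sum
  have hmeas : ((do
        let a ← μ
        let b ← μ
        return (a, b)) : PMF ((Fin D → ZMod 2) × (Fin D → ZMod 2))).toOuterMeasure
        {q | (hammingDist q.1 q.2 : ℝ) ≤ ε1 * D}
      = ENNReal.ofReal (∑ a, ∑ b, q a * q b *
          (if (hammingDist a b : ℝ) ≤ ε1 * D then (1:ℝ) else 0)) := by
    have hbind : ((do let a ← μ; let b ← μ; return (a, b)) :
        PMF ((Fin D → ZMod 2) × (Fin D → ZMod 2)))
        = μ.bind (fun a => μ.bind (fun b => PMF.pure (a, b))) := rfl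
    set S : Set ((Fin D → ZMod 2) × (Fin D → ZMod 2)) :=
      {q | (hammingDist q.1 q.2 : ℝ) ≤ ε1 * D} with hS
    rw [hbind, PMF.toOuterMeasure_bind_apply]
    have hin : ∀ a, (μ.bind (fun b => PMF.pure (a, b))).toOuterMeasure S
        = ∑ b, μ b * (if (a, b) ∈ S then 1 else 0) := by
      intro a
      rw [PMF.toOuterMeasure_bind_apply, tsum_fintype]
      exact Finset.sum_congr rfl fun b _ => by rw [PMF.toOuterMeasure_pure_apply]
    rw [tsum_fintype]
    rw [Finset.sum_congr rfl fun a _ => by rw [hin a]]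
    rw [ENNReal.ofReal_sum_of_nonneg (fun a _ => Finset.sum_nonneg fun b _ => by positivity)]
    refine Finset.sum_congr rfl fun a _ => ?_
    rw [ENNReal.ofReal_sum_of_nonneg (fun b _ => by positivity), Finset.mul_sum]
    refine Finset.sum_congr rfl fun b _ => ?_
    by_cases h : (hammingDist a b : ℝ) ≤ ε1 * D
    · have hmem : (a, b) ∈ S := h
      rw [if_pos hmem, if_pos h, mul_one, mul_one,
        ENNReal.ofReal_mul (hq0 a), ENNReal.ofReal_toReal (μ.apply_ne_top a),
        ENNReal.ofReal_toReal (μ.apply_ne_top b)]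
    · have hmem : (a, b) ∉ S := h
      rw [if_neg hmem, if_neg h]
      simp
  rw [hmeas]
  refine ENNReal.ofReal_le_ofReal ?_
  -- algebra: 1/c² ≤ 1 - (1-γ²)/(2ε1)
  have halg : 1 / c ^ 2 ≤ 1 - (1 - γ ^ 2) / (2 * ε1) := by
    have hA : 1 - (1 - γ ^ 2) / (2 * ε1) = (γ ^ 2 - δeps) / (2 * ε1) := by
      rw [hδ]; field_simp; ring
    have h1δ : 1 - δeps = 2 * ε1 := by rw [hδ]; ring
    have hcval : c * (γ ^ 2 - δeps) = 2 * ε1 + (γ ^ 2 - δeps) := by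
      rw [hc, ← h1δ]; field_simp
    rw [hA, div_le_div_iff₀ (by positivity) (by linarith : (0:ℝ) < 2 * ε1)]
    nlinarith [hcval, hc1, hgpos, hε1pos]
  linarith [hreal]
end
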